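/- Consider on ℝ³ the vector fields X₀(x) = (cos x₃, sin x₃, 1) and X₁(x) = (0, 0, 1), and the family ℱ' = {X₀ + u·X₁ : u ∈ ℝ}. There exists T₁ > 0 such that for every x' ∈ ℝ³, every z ∈ ℝ³, and every ε > 0, there exist a piecewise integral curve η : [0, T₁] → ℝ³ of ℱ' with η(0) = x' and a lattice point k ∈ ℤ³ with |η(T₁) − z − 2πk| < ε. (Equivalently, on the torus 𝕋³ = (ℝ/2πℤ)³, the closure of the time-T₁ reachable set of ℱ' from any point is all of 𝕋³.) -/

import Mathlib

open scoped RealInnerProductSpace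

/-- A piecewise integral curve of a family `F` of vector fields on `[0, T]`:
a continuous curve which, on each piece of some partition `0 = t₀ < t₁ < … < t_m = T`,
is an integral curve of a single member of `F`. -/
def IsPiecewiseIntegralCurve {E : Type*} [NormedAddCommGroup E] [NormedSpace ℝ E]
    (F : Set (E → E)) (T : ℝ) (η : ℝ → E) : Prop :=
  ContinuousOn η (Set.Icc 0 T) ∧
  ∃ (m : ℕ) (τ : Fin (m + 1) → ℝ), τ 0 = 0 ∧ τ (Fin.last m) = T ∧ StrictMono τ ∧
    ∀ i : Fin m, ∃ V ∈ F, ∀ s ∈ Set.Ioo (τ i.castSucc) (τ i.succ),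
      HasDerivAt η (V (η s)) s

/-- The drift vector field `X₀(x) = (cos x₃, sin x₃, 1)` on `ℝ³`. -/
noncomputable def X0 : EuclideanSpace ℝ (Fin 3) → EuclideanSpace ℝ (Fin 3) :=
  fun x => WithLp.toLp 2 ![Real.cos (x 2), Real.sin (x 2), 1]

/-- The vector field `X₁(x) = (0, 0, 1)` on `ℝ³`. -/
noncomputable def X1 : EuclideanSpace ℝ (Fin 3) → EuclideanSpace ℝ (Fin 3) :=
  fun _ => WithLp.toLp 2 ![0, 0, 1]

/-- The control family `ℱ' = {X₀ + u·X₁ : u ∈ ℝ}`. -/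
noncomputable def F' : Set (EuclideanSpace ℝ (Fin 3) → EuclideanSpace ℝ (Fin 3)) :=
  {V | ∃ u : ℝ, V = fun x => X0 x + u • X1 x}

/-- The lattice point `2πk ∈ ℝ³` for `k ∈ ℤ³`. -/
noncomputable def latticePt (k : Fin 3 → ℤ) : EuclideanSpace ℝ (Fin 3) :=
  WithLp.toLp 2 (fun i => 2 * Real.pi * (k i : ℝ))

section Aux12
open Real Set

lemma my_e3_ext (a b : EuclideanSpace ℝ (Fin 3)) (h0 : a 0 = b 0) (h1 : a 1 = b 1)
    (h2 : a 2 = b 2) : a = b := by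
  ext i
  fin_cases i <;> assumption

lemma my_hasDerivAt_e3 {f g h : ℝ → ℝ} {f' g' h' : ℝ} {s : ℝ}
    (hf : HasDerivAt f f' s) (hg : HasDerivAt g g' s) (hh : HasDerivAt h h' s) :
    HasDerivAt (F := EuclideanSpace ℝ (Fin 3)) (fun t => WithLp.toLp 2 ![f t, g t, h t]) (WithLp.toLp 2 ![f', g', h']) s := by
  have hpi : HasDerivAt (fun t => (![f t, g t, h t] : Fin 3 → ℝ)) (![f', g', h']) s := by
    rw [hasDerivAt_pi]
    intro i
    fin_cases i
    · simpa using hf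
    · simpa using hg
    · simpa using hh
  exact ((EuclideanSpace.equiv (Fin 3) ℝ).symm.toContinuousLinearMap.hasFDerivAt).comp_hasDerivAt s hpi

lemma my_continuous_e3 {f g h : ℝ → ℝ} (hf : Continuous f) (hg : Continuous g)
    (hh : Continuous h) : Continuous (fun t => (WithLp.toLp 2 ![f t, g t, h t] : EuclideanSpace ℝ (Fin 3))) := by
  have hpi : Continuous (fun t => (![f t, g t, h t] : Fin 3 → ℝ)) := by
    apply continuous_pi
    intro i
    fin_cases i
    · simpa using hf
    · simpa using hg
    · simpa using hh
  exact ((EuclideanSpace.equiv (Fin 3) ℝ).symm.continuous).comp hpi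

noncomputable def Phi (c : ℝ) (x : EuclideanSpace ℝ (Fin 3)) (t : ℝ) :
    EuclideanSpace ℝ (Fin 3) :=
  if c = 0 then WithLp.toLp 2 ![x 0 + t * Real.cos (x 2), x 1 + t * Real.sin (x 2), x 2]
  else WithLp.toLp 2 ![x 0 + (Real.sin (x 2 + c * t) - Real.sin (x 2)) / c,
        x 1 - (Real.cos (x 2 + c * t) - Real.cos (x 2)) / c,
        x 2 + c * t]

lemma Phi_zero (c : ℝ) (x : EuclideanSpace ℝ (Fin 3)) : Phi c x 0 = x := by
  ext i
  unfold Phi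
  split_ifs with hc <;> fin_cases i <;> simp

lemma Phi_apply_two (c : ℝ) (x : EuclideanSpace ℝ (Fin 3)) (t : ℝ) :
    (Phi c x t) 2 = x 2 + c * t := by
  unfold Phi
  split_ifs with hc <;> simp [hc]

lemma Phi_zero_apply_zero (x : EuclideanSpace ℝ (Fin 3)) (t : ℝ) :
    (Phi 0 x t) 0 = x 0 + t * Real.cos (x 2) := by
  simp [Phi]

lemma Phi_zero_apply_one (x : EuclideanSpace ℝ (Fin 3)) (t : ℝ) :
    (Phi 0 x t) 1 = x 1 + t * Real.sin (x 2) := by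
  simp [Phi]

lemma abs_sin_sub_sin (a b : ℝ) : |Real.sin a - Real.sin b| ≤ |a - b| := by
  rw [Real.sin_sub_sin]
  calc |2 * Real.sin ((a - b) / 2) * Real.cos ((a + b) / 2)|
      = 2 * |Real.sin ((a - b) / 2)| * |Real.cos ((a + b) / 2)| := by
        rw [abs_mul, abs_mul]; norm_num
    _ ≤ 2 * |(a - b) / 2| * 1 := by
        have h1 : |Real.sin ((a - b) / 2)| ≤ |(a - b) / 2| := Real.abs_sin_le_abs
        have h2 := Real.abs_cos_le_one ((a + b) / 2)
        nlinarith [abs_nonneg (Real.sin ((a - b) / 2)), abs_nonneg ((a - b) / 2),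
          abs_nonneg (Real.cos ((a + b) / 2))]
    _ = |a - b| := by rw [abs_div, abs_two]; ring

lemma abs_cos_sub_cos (a b : ℝ) : |Real.cos a - Real.cos b| ≤ |a - b| := by
  rw [Real.cos_sub_cos]
  calc |-2 * Real.sin ((a + b) / 2) * Real.sin ((a - b) / 2)|
      = 2 * |Real.sin ((a + b) / 2)| * |Real.sin ((a - b) / 2)| := by
        rw [abs_mul, abs_mul]; norm_num
    _ ≤ 2 * 1 * |(a - b) / 2| := by
        have h1 : |Real.sin ((a - b) / 2)| ≤ |(a - b) / 2| := Real.abs_sin_le_abs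
        have h2 := Real.abs_sin_le_one ((a + b) / 2)
        nlinarith [abs_nonneg (Real.sin ((a - b) / 2)), abs_nonneg ((a - b) / 2),
          abs_nonneg (Real.sin ((a + b) / 2))]
    _ = |a - b| := by rw [abs_div, abs_two]; ring

lemma Phi_dist0 (c : ℝ) (x : EuclideanSpace ℝ (Fin 3)) (t : ℝ) :
    |(Phi c x t) 0 - x 0| ≤ |t| := by
  unfold Phi
  split_ifs with hc
  · simp only [Matrix.cons_val_zero, add_sub_cancel_left, abs_mul]
    exact mul_le_of_le_one_right (abs_nonneg t) (Real.abs_cos_le_one _)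
  · simp only [Matrix.cons_val_zero, add_sub_cancel_left, abs_div]
    rw [div_le_iff₀ (abs_pos.mpr hc)]
    calc |Real.sin (x 2 + c * t) - Real.sin (x 2)| ≤ |x 2 + c * t - x 2| := abs_sin_sub_sin _ _
      _ = |c| * |t| := by rw [add_sub_cancel_left, abs_mul]
      _ = |t| * |c| := mul_comm _ _

lemma Phi_dist1 (c : ℝ) (x : EuclideanSpace ℝ (Fin 3)) (t : ℝ) :
    |(Phi c x t) 1 - x 1| ≤ |t| := by
  unfold Phi
  split_ifs with hc
  · simp only [Matrix.cons_val_one, Matrix.head_cons, Matrix.cons_val_zero, add_sub_cancel_left, abs_mul]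
    exact mul_le_of_le_one_right (abs_nonneg t) (Real.abs_sin_le_one _)
  · simp only [Matrix.cons_val_one, Matrix.head_cons, Matrix.cons_val_zero, sub_sub_cancel_left, abs_div, abs_neg]
    rw [div_le_iff₀ (abs_pos.mpr hc)]
    calc |Real.cos (x 2 + c * t) - Real.cos (x 2)| ≤ |x 2 + c * t - x 2| := abs_cos_sub_cos _ _
      _ = |c| * |t| := by rw [add_sub_cancel_left, abs_mul]
      _ = |t| * |c| := mul_comm _ _

lemma continuous_Phi (c : ℝ) (x : EuclideanSpace ℝ (Fin 3)) (t₀ : ℝ) :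
    Continuous (fun t => Phi c x (t - t₀)) := by
  unfold Phi
  split_ifs with hc
  · exact my_continuous_e3 (by fun_prop) (by fun_prop) (by fun_prop)
  · exact my_continuous_e3 (by fun_prop) (by fun_prop) (by fun_prop)

lemma hasDerivAt_Phi (c : ℝ) (x : EuclideanSpace ℝ (Fin 3)) (t₀ s : ℝ) :
    HasDerivAt (fun t => Phi c x (t - t₀))
      (X0 (Phi c x (s - t₀)) + (c - 1) • X1 (Phi c x (s - t₀))) s := by
  have hval : X0 (Phi c x (s - t₀)) + (c - 1) • X1 (Phi c x (s - t₀))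
      = (WithLp.toLp 2 ![Real.cos (x 2 + c * (s - t₀)), Real.sin (x 2 + c * (s - t₀)), c] :
          EuclideanSpace ℝ (Fin 3)) := by
    apply my_e3_ext <;>
      simp [X0, X1, PiLp.add_apply, PiLp.smul_apply, Phi_apply_two] <;> ring
  rw [hval]
  unfold Phi
  split_ifs with hc
  · subst hc
    simp only [zero_mul, add_zero]
    have h0 : HasDerivAt (fun t => x 0 + (t - t₀) * Real.cos (x 2)) (Real.cos (x 2)) s := by
      simpa using (((hasDerivAt_id s).sub_const t₀).mul_const (Real.cos (x 2))).const_add (x 0)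
    have h1 : HasDerivAt (fun t => x 1 + (t - t₀) * Real.sin (x 2)) (Real.sin (x 2)) s := by
      simpa using (((hasDerivAt_id s).sub_const t₀).mul_const (Real.sin (x 2))).const_add (x 1)
    exact my_hasDerivAt_e3 h0 h1 (hasDerivAt_const s (x 2))
  · have hin : HasDerivAt (fun t => x 2 + c * (t - t₀)) c s := by
      simpa using ((hasDerivAt_id s).sub_const t₀).const_mul c |>.const_add (x 2)
    have h0 : HasDerivAt (fun t => x 0 + (Real.sin (x 2 + c * (t - t₀)) - Real.sin (x 2)) / c)
        (Real.cos (x 2 + c * (s - t₀))) s := by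
      have := (hin.sin.sub_const (Real.sin (x 2))).div_const c |>.const_add (x 0)
      exact this.congr_deriv (by field_simp)
    have h1 : HasDerivAt (fun t => x 1 - (Real.cos (x 2 + c * (t - t₀)) - Real.cos (x 2)) / c)
        (Real.sin (x 2 + c * (s - t₀))) s := by
      have := ((hin.cos.sub_const (Real.cos (x 2))).div_const c).const_sub (x 1)
      exact this.congr_deriv (by field_simp)
    exact my_hasDerivAt_e3 h0 h1 hin

lemma choose_k (w : ℝ) : ∃ k : ℤ, |w + 2 * Real.pi * k| ≤ Real.pi := by
  refine ⟨-round (w / (2 * Real.pi)), ?_⟩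
  have hpi : (0:ℝ) < 2 * Real.pi := by positivity
  have h := abs_sub_round (w / (2 * Real.pi))
  push_cast
  have key : w + 2 * Real.pi * (-(round (w / (2 * Real.pi)) : ℝ)) =
      (2 * Real.pi) * (w / (2 * Real.pi) - (round (w / (2 * Real.pi)) : ℝ)) := by
    field_simp
    ring
  rw [key, abs_mul, abs_of_pos hpi]
  calc 2 * Real.pi * |w / (2 * Real.pi) - ↑(round (w / (2 * Real.pi)))| ≤ 2 * Real.pi * (1/2) := by
        gcongr
    _ = Real.pi := by ring

lemma legs (S : ℝ) (hS : 8 ≤ S) (D₁ D₂ : ℝ) (h1 : |D₁| ≤ Real.pi) (h2 : |D₂| ≤ Real.pi) :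
    ∃ θ₁ θ₂ : ℝ, S / 2 * Real.cos θ₁ + S / 2 * Real.cos θ₂ = D₁ ∧
      S / 2 * Real.sin θ₁ + S / 2 * Real.sin θ₂ = D₂ := by
  set w : ℂ := ⟨D₁, D₂⟩ with hw
  have hS0 : (0:ℝ) < S := by linarith
  have hr : ‖w‖ ≤ S := by
    calc ‖w‖ ≤ |w.re| + |w.im| := Complex.norm_le_abs_re_add_abs_im w
      _ = |D₁| + |D₂| := rfl
      _ ≤ Real.pi + Real.pi := by gcongr
      _ ≤ S := by nlinarith [Real.pi_le_four]
  set r := ‖w‖ with hrdef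
  have hr0 : 0 ≤ r := norm_nonneg w
  set φ := Complex.arg w with hφ
  set α := Real.arccos (r / S) with hα
  have h01 : (0:ℝ) ≤ r / S := by positivity
  have hcos : Real.cos α = r / S :=
    Real.cos_arccos (by linarith) (by rw [div_le_one hS0]; exact hr)
  refine ⟨φ + α, φ - α, ?_, ?_⟩
  · have : Real.cos (φ + α) + Real.cos (φ - α) = 2 * Real.cos φ * Real.cos α := by
      rw [Real.cos_add, Real.cos_sub]; ring
    have hre : r * Real.cos φ = D₁ := by
      exact Complex.norm_mul_cos_arg w
    calc S / 2 * Real.cos (φ + α) + S / 2 * Real.cos (φ - α)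
        = S / 2 * (Real.cos (φ + α) + Real.cos (φ - α)) := by ring
      _ = S * Real.cos φ * Real.cos α := by rw [this]; ring
      _ = S * Real.cos φ * (r / S) := by rw [hcos]
      _ = r * Real.cos φ := by field_simp
      _ = D₁ := hre
  · have : Real.sin (φ + α) + Real.sin (φ - α) = 2 * Real.sin φ * Real.cos α := by
      rw [Real.sin_add, Real.sin_sub]; ring
    have him : r * Real.sin φ = D₂ := by
      exact Complex.norm_mul_sin_arg w
    calc S / 2 * Real.sin (φ + α) + S / 2 * Real.sin (φ - α)
        = S / 2 * (Real.sin (φ + α) + Real.sin (φ - α)) := by ring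
      _ = S * Real.sin φ * Real.cos α := by rw [this]; ring
      _ = S * Real.sin φ * (r / S) := by rw [hcos]
      _ = r * Real.sin φ := by field_simp
      _ = D₂ := him

noncomputable def etaAux (c₁ c₂ c₃ c₄ c₅ t₁ t₂ t₃ t₄ : ℝ) (x : EuclideanSpace ℝ (Fin 3)) :
    ℝ → EuclideanSpace ℝ (Fin 3) := fun t =>
  if t ≤ t₁ then Phi c₁ x t
  else if t ≤ t₂ then Phi c₂ (Phi c₁ x t₁) (t - t₁)
  else if t ≤ t₃ then Phi c₃ (Phi c₂ (Phi c₁ x t₁) (t₂ - t₁)) (t - t₂)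
  else if t ≤ t₄ then
    Phi c₄ (Phi c₃ (Phi c₂ (Phi c₁ x t₁) (t₂ - t₁)) (t₃ - t₂)) (t - t₃)
  else
    Phi c₅ (Phi c₄ (Phi c₃ (Phi c₂ (Phi c₁ x t₁) (t₂ - t₁)) (t₃ - t₂)) (t₄ - t₃)) (t - t₄)

lemma continuous_etaAux (c₁ c₂ c₃ c₄ c₅ t₁ t₂ t₃ t₄ : ℝ) (x : EuclideanSpace ℝ (Fin 3))
    (h12 : t₁ ≤ t₂) (h23 : t₂ ≤ t₃) (h34 : t₃ ≤ t₄) :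
    Continuous (etaAux c₁ c₂ c₃ c₄ c₅ t₁ t₂ t₃ t₄ x) := by
  unfold etaAux
  apply Continuous.if_le ?_ ?_ continuous_id continuous_const
  · intro t ht
    simp only [id_eq] at ht
    subst ht
    rw [if_pos h12, sub_self, Phi_zero]
  · simpa using continuous_Phi c₁ x 0
  apply Continuous.if_le ?_ ?_ continuous_id continuous_const
  · intro t ht
    simp only [id_eq] at ht
    subst ht
    rw [if_pos h23, sub_self, Phi_zero]
  · exact continuous_Phi _ _ _
  apply Continuous.if_le ?_ ?_ continuous_id continuous_const
  · intro t ht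
    simp only [id_eq] at ht
    subst ht
    rw [if_pos h34, sub_self, Phi_zero]
  · exact continuous_Phi _ _ _
  apply Continuous.if_le (continuous_Phi _ _ _) (continuous_Phi _ _ _) continuous_id
    continuous_const
  intro t ht
  simp only [id_eq] at ht
  subst ht
  rw [sub_self, Phi_zero]

lemma etaAux_apply_last (c₁ c₃ c₅ δ S : ℝ) (x : EuclideanSpace ℝ (Fin 3))
    (h2 : 0 < S) (h3 : 2 * δ + S < 11) :
    etaAux c₁ 0 c₃ 0 c₅ δ (δ + S / 2) (2 * δ + S / 2) (2 * δ + S) x 11 =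
      Phi c₅ (Phi 0 (Phi c₃ (Phi 0 (Phi c₁ x δ) (S / 2)) δ) (S / 2)) (11 - (2 * δ + S)) := by
  unfold etaAux
  rw [if_neg (by linarith), if_neg (by linarith), if_neg (by linarith), if_neg (by linarith),
    show (δ + S / 2) - δ = S / 2 by ring, show (2 * δ + S / 2) - (δ + S / 2) = δ by ring,
    show (2 * δ + S) - (2 * δ + S / 2) = S / 2 by ring]

end Aux12

set_option maxHeartbeats 1000000 in
/-- There exists `T₁ > 0` such that from any `x' ∈ ℝ³` and towards any
target `z ∈ ℝ³` and any `ε > 0`, some piecewise integral curve of `ℱ'` starting at `x'`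
reaches, at time `T₁`, an `ε`-neighborhood of `z` modulo the lattice `2πℤ³`. -/
theorem statement12 :
    ∃ T₁ : ℝ, 0 < T₁ ∧ ∀ x' z : EuclideanSpace ℝ (Fin 3), ∀ ε : ℝ, 0 < ε →
      ∃ η : ℝ → EuclideanSpace ℝ (Fin 3),
        IsPiecewiseIntegralCurve F' T₁ η ∧ η 0 = x' ∧
        ∃ k : Fin 3 → ℤ, ‖η T₁ - z - latticePt k‖ < ε := by
  refine ⟨11, by norm_num, ?_⟩
  intro x' z ε hε
  have hmin : 0 < min 1 (ε / 10) := lt_min one_pos (by positivity)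
  set δ := min 1 (ε / 10) / 2 with hδdef
  have hδ0 : 0 < δ := half_pos hmin
  have hδ1 : δ ≤ 1 / 2 := by
    have := min_le_left 1 (ε / 10); rw [hδdef]; linarith
  have hδε : δ ≤ ε / 20 := by
    have := min_le_right 1 (ε / 10); rw [hδdef]; linarith
  set S := 11 - 3 * δ with hSdef
  have hS8 : 8 ≤ S := by rw [hSdef]; linarith
  have hS0 : 0 < S := by linarith
  obtain ⟨k₀, hk₀⟩ := choose_k (z 0 - x' 0)
  obtain ⟨k₁, hk₁⟩ := choose_k (z 1 - x' 1)
  obtain ⟨θ₁, θ₂, hleg1, hleg2⟩ := legs S hS8 _ _ hk₀ hk₁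
  set c₁ := (θ₁ - x' 2) / δ with hc₁
  set c₃ := (θ₂ - θ₁) / δ with hc₃
  set c₅ := (z 2 - θ₂) / δ with hc₅
  set η := etaAux c₁ 0 c₃ 0 c₅ δ (δ + S / 2) (2 * δ + S / 2) (2 * δ + S) x' with hηdef
  set x1 := Phi c₁ x' δ with hx1
  set x2 := Phi 0 x1 (S / 2) with hx2
  set x3 := Phi c₃ x2 δ with hx3
  set x4 := Phi 0 x3 (S / 2) with hx4
  set x5 := Phi c₅ x4 δ with hx5
  have hx1_2 : x1 2 = θ₁ := by
    rw [hx1, Phi_apply_two, hc₁]; field_simp; ring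
  have hx2_2 : x2 2 = θ₁ := by rw [hx2, Phi_apply_two, hx1_2]; ring
  have hx3_2 : x3 2 = θ₂ := by
    rw [hx3, Phi_apply_two, hx2_2, hc₃]; field_simp; ring
  have hx4_2 : x4 2 = θ₂ := by rw [hx4, Phi_apply_two, hx3_2]; ring
  have hx5_2 : x5 2 = z 2 := by
    rw [hx5, Phi_apply_two, hx4_2, hc₅]; field_simp; ring
  have hx2_0 : x2 0 = x1 0 + S / 2 * Real.cos θ₁ := by
    rw [hx2, Phi_zero_apply_zero, hx1_2]
  have hx2_1 : x2 1 = x1 1 + S / 2 * Real.sin θ₁ := by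
    rw [hx2, Phi_zero_apply_one, hx1_2]
  have hx4_0 : x4 0 = x3 0 + S / 2 * Real.cos θ₂ := by
    rw [hx4, Phi_zero_apply_zero, hx3_2]
  have hx4_1 : x4 1 = x3 1 + S / 2 * Real.sin θ₂ := by
    rw [hx4, Phi_zero_apply_one, hx3_2]
  have hd1 := Phi_dist0 c₁ x' δ
  have hd1' := Phi_dist1 c₁ x' δ
  have hd3 := Phi_dist0 c₃ x2 δ
  have hd3' := Phi_dist1 c₃ x2 δ
  have hd5 := Phi_dist0 c₅ x4 δ
  have hd5' := Phi_dist1 c₅ x4 δ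
  rw [abs_of_pos hδ0] at hd1 hd1' hd3 hd3' hd5 hd5'
  rw [← hx1] at hd1 hd1'
  rw [← hx3] at hd3 hd3'
  rw [← hx5] at hd5 hd5'
  have hfin0 : |x5 0 - z 0 - 2 * Real.pi * k₀| ≤ 3 * δ := by
    rw [abs_le] at hd1 hd3 hd5 hk₀ ⊢
    constructor <;> linarith [hd1.1, hd1.2, hd3.1, hd3.2, hd5.1, hd5.2]
  have hfin1 : |x5 1 - z 1 - 2 * Real.pi * k₁| ≤ 3 * δ := by
    rw [abs_le] at hd1' hd3' hd5' hk₁ ⊢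
    constructor <;> linarith [hd1'.1, hd1'.2, hd3'.1, hd3'.2, hd5'.1, hd5'.2]
  have hηT : η 11 = x5 := by
    rw [hηdef, etaAux_apply_last c₁ c₃ c₅ δ S x' hS0 (by linarith),
      show 11 - (2 * δ + S) = δ by rw [hSdef]; ring, ← hx1, ← hx2, ← hx3, ← hx4, ← hx5]
  refine ⟨η, ⟨?_, ?_⟩, ?_, ![k₀, k₁, 0], ?_⟩
  · exact (continuous_etaAux _ _ _ _ _ _ _ _ _ _ (by linarith) (by linarith)
      (by linarith)).continuousOn
  · refine ⟨5, ![0, δ, δ + S / 2, 2 * δ + S / 2, 2 * δ + S, 11], by simp,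
      by norm_num [Fin.last], ?_, ?_⟩
    · rw [Fin.strictMono_iff_lt_succ]
      intro i
      fin_cases i <;> norm_num [Fin.castSucc, Fin.succ, Fin.castAdd, Fin.castLE] <;> linarith
    · intro i
      fin_cases i
      · refine ⟨fun y => X0 y + (c₁ - 1) • X1 y, ⟨c₁ - 1, rfl⟩, ?_⟩
        intro s hs
        norm_num [Fin.castSucc, Fin.succ, Fin.castAdd, Fin.castLE] at hs
        have hev : η =ᶠ[nhds s] fun t => Phi c₁ x' (t - 0) := by
          filter_upwards [Ioo_mem_nhds hs.1 hs.2] with t ht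
          simp only [hηdef, etaAux]
          rw [if_pos ht.2.le, sub_zero]
        have hval : η s = Phi c₁ x' (s - 0) := hev.eq_of_nhds
        rw [hval]
        exact (hasDerivAt_Phi c₁ x' 0 s).congr_of_eventuallyEq hev
      · refine ⟨fun y => X0 y + (0 - 1) • X1 y, ⟨0 - 1, rfl⟩, ?_⟩
        intro s hs
        norm_num [Fin.castSucc, Fin.succ, Fin.castAdd, Fin.castLE] at hs
        have hev : η =ᶠ[nhds s] fun t => Phi 0 (Phi c₁ x' δ) (t - δ) := by
          filter_upwards [Ioo_mem_nhds hs.1 hs.2] with t ht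
          simp only [hηdef, etaAux]
          rw [if_neg (not_le.2 ht.1), if_pos ht.2.le]
        have hval : η s = Phi 0 (Phi c₁ x' δ) (s - δ) := hev.eq_of_nhds
        rw [hval]
        exact (hasDerivAt_Phi 0 (Phi c₁ x' δ) δ s).congr_of_eventuallyEq hev
      · refine ⟨fun y => X0 y + (c₃ - 1) • X1 y, ⟨c₃ - 1, rfl⟩, ?_⟩
        intro s hs
        norm_num [Fin.castSucc, Fin.succ, Fin.castAdd, Fin.castLE] at hs
        have hev : η =ᶠ[nhds s] fun t => Phi c₃ (Phi 0 (Phi c₁ x' δ) (δ + S / 2 - δ)) (t - (δ + S / 2)) := by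
          filter_upwards [Ioo_mem_nhds hs.1 hs.2] with t ht
          simp only [hηdef, etaAux]
          rw [if_neg (not_le.2 (by linarith [ht.1])), if_neg (not_le.2 ht.1), if_pos ht.2.le]
        have hval : η s = Phi c₃ (Phi 0 (Phi c₁ x' δ) (δ + S / 2 - δ)) (s - (δ + S / 2)) := hev.eq_of_nhds
        rw [hval]
        exact (hasDerivAt_Phi c₃ (Phi 0 (Phi c₁ x' δ) (δ + S / 2 - δ)) (δ + S / 2) s).congr_of_eventuallyEq hev
      · refine ⟨fun y => X0 y + (0 - 1) • X1 y, ⟨0 - 1, rfl⟩, ?_⟩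
        intro s hs
        norm_num [Fin.castSucc, Fin.succ, Fin.castAdd, Fin.castLE] at hs
        have hev : η =ᶠ[nhds s] fun t => Phi 0 (Phi c₃ (Phi 0 (Phi c₁ x' δ) (δ + S / 2 - δ)) (2 * δ + S / 2 - (δ + S / 2))) (t - (2 * δ + S / 2)) := by
          filter_upwards [Ioo_mem_nhds hs.1 hs.2] with t ht
          simp only [hηdef, etaAux]
          rw [if_neg (not_le.2 (by linarith [ht.1])), if_neg (not_le.2 (by linarith [ht.1])), if_neg (not_le.2 ht.1), if_pos ht.2.le]
        have hval : η s = Phi 0 (Phi c₃ (Phi 0 (Phi c₁ x' δ) (δ + S / 2 - δ)) (2 * δ + S / 2 - (δ + S / 2))) (s - (2 * δ + S / 2)) := hev.eq_of_nhds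
        rw [hval]
        exact (hasDerivAt_Phi 0 (Phi c₃ (Phi 0 (Phi c₁ x' δ) (δ + S / 2 - δ)) (2 * δ + S / 2 - (δ + S / 2))) (2 * δ + S / 2) s).congr_of_eventuallyEq hev
      · refine ⟨fun y => X0 y + (c₅ - 1) • X1 y, ⟨c₅ - 1, rfl⟩, ?_⟩
        intro s hs
        norm_num [Fin.castSucc, Fin.succ, Fin.castAdd, Fin.castLE] at hs
        have hev : η =ᶠ[nhds s] fun t => Phi c₅ (Phi 0 (Phi c₃ (Phi 0 (Phi c₁ x' δ) (δ + S / 2 - δ)) (2 * δ + S / 2 - (δ + S / 2))) (2 * δ + S - (2 * δ + S / 2))) (t - (2 * δ + S)) := by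
          filter_upwards [Ioo_mem_nhds hs.1 hs.2] with t ht
          simp only [hηdef, etaAux]
          rw [if_neg (not_le.2 (by linarith [ht.1])), if_neg (not_le.2 (by linarith [ht.1])), if_neg (not_le.2 (by linarith [ht.1])), if_neg (not_le.2 ht.1)]
        have hval : η s = Phi c₅ (Phi 0 (Phi c₃ (Phi 0 (Phi c₁ x' δ) (δ + S / 2 - δ)) (2 * δ + S / 2 - (δ + S / 2))) (2 * δ + S - (2 * δ + S / 2))) (s - (2 * δ + S)) := hev.eq_of_nhds
        rw [hval]
        exact (hasDerivAt_Phi c₅ (Phi 0 (Phi c₃ (Phi 0 (Phi c₁ x' δ) (δ + S / 2 - δ)) (2 * δ + S / 2 - (δ + S / 2))) (2 * δ + S - (2 * δ + S / 2))) (2 * δ + S) s).congr_of_eventuallyEq hev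
  · rw [hηdef]
    show (if (0:ℝ) ≤ δ then Phi c₁ x' 0 else _) = x'
    rw [if_pos hδ0.le, Phi_zero]
  · rw [hηT]
    have e0 : (x5 - z - latticePt ![k₀, k₁, 0]) 0 = x5 0 - z 0 - 2 * Real.pi * k₀ := by
      simp [latticePt]
    have e1 : (x5 - z - latticePt ![k₀, k₁, 0]) 1 = x5 1 - z 1 - 2 * Real.pi * k₁ := by
      simp [latticePt]
    have e2 : (x5 - z - latticePt ![k₀, k₁, 0]) 2 = 0 := by
      simp [latticePt, hx5_2]
    rw [EuclideanSpace.norm_eq, Fin.sum_univ_three, e0, e1, e2]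
    simp only [Real.norm_eq_abs]
    rw [Real.sqrt_lt' hε]
    have h0 : |x5 0 - z 0 - 2 * Real.pi * ↑k₀| ^ 2 ≤ (3 * δ) ^ 2 :=
      pow_le_pow_left₀ (abs_nonneg _) hfin0 2
    have h1 : |x5 1 - z 1 - 2 * Real.pi * ↑k₁| ^ 2 ≤ (3 * δ) ^ 2 :=
      pow_le_pow_left₀ (abs_nonneg _) hfin1 2
    have hlast : 18 * δ ^ 2 < ε ^ 2 := by nlinarith
    simp only [abs_zero]
    nlinarith
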